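/- arXiv:2101.04368 — 2 statements merged into one kernel-verified Lean document; each statement's English description precedes it below -/
import Mathlib

section
/- Let f be a function with values in n×n complex matrices, holomorphic in a neighborhood of 0 in ℂ, such that f(ζ) is a symmetric matrix for every ζ in this neighborhood, f(0) = 0, and f′(0) = Id. Then there exists ε > 0 such that for every τ ∈ (0, ε), the matrix f(iτ) is invertible and the real matrix Im(−f(iτ)⁻¹) is symmetric positive definite. -/
open Filter Matrix

lemma aux_posdef_of_close {n : ℕ} (R : Matrix (Fin n) (Fin n) ℝ)
    (hsym : R.IsHermitian)
    (hclose : ∀ j k, |R j k - (1 : Matrix (Fin n) (Fin n) ℝ) j k| ≤ ((n : ℝ) + 1)⁻¹) :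
    R.PosDef := by
  have hn1 : (0 : ℝ) < (n : ℝ) + 1 := by positivity
  refine posDef_iff_dotProduct_mulVec.2 ⟨hsym, fun x hx => ?_⟩
  have hxstar : star x = x := by simp
  set S : ℝ := ∑ j, x j ^ 2 with hS
  have hSpos : 0 < S := by
    obtain ⟨j, hj⟩ := Function.ne_iff.1 hx
    have hj' : x j ≠ 0 := hj
    have : (0 : ℝ) < x j ^ 2 := pow_two_pos_of_ne_zero hj'
    exact lt_of_lt_of_le this
      (Finset.single_le_sum (fun i _ => sq_nonneg (x i)) (Finset.mem_univ j))
  have hdot : dotProduct (star x) (R *ᵥ x)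
      = ∑ j, ∑ k, x j * R j k * x k := by
    rw [hxstar]
    simp [dotProduct, Matrix.mulVec, Finset.mul_sum, mul_assoc]
  have hrowsum : ∀ j, ∑ k, x j * R j k * x k
      = x j ^ 2 + ∑ k, x j * (R j k - (1 : Matrix (Fin n) (Fin n) ℝ) j k) * x k := by
    intro j
    have h1 : ∑ k, x j * (1 : Matrix (Fin n) (Fin n) ℝ) j k * x k = x j ^ 2 := by
      simp [Matrix.one_apply, mul_ite, ite_mul, sq]
    rw [← h1, ← Finset.sum_add_distrib]
    refine Finset.sum_congr rfl fun k _ => by ring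
  set E : ℝ := ∑ j, ∑ k, x j * (R j k - (1 : Matrix (Fin n) (Fin n) ℝ) j k) * x k with hE
  have hsplit : ∑ j, ∑ k, x j * R j k * x k = S + E := by
    rw [hE, hS, ← Finset.sum_add_distrib]
    exact Finset.sum_congr rfl fun j _ => hrowsum j
  have hEbound : |E| ≤ ((n : ℝ) + 1)⁻¹ * (∑ j, |x j|) ^ 2 := by
    calc |E| ≤ ∑ j, |∑ k, x j * (R j k - (1 : Matrix (Fin n) (Fin n) ℝ) j k) * x k| :=
          Finset.abs_sum_le_sum_abs _ _
      _ ≤ ∑ j, ∑ k, |x j * (R j k - (1 : Matrix (Fin n) (Fin n) ℝ) j k) * x k| :=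
          Finset.sum_le_sum fun j _ => Finset.abs_sum_le_sum_abs _ _
      _ ≤ ∑ j, ∑ k, |x j| * ((n : ℝ) + 1)⁻¹ * |x k| := by
          refine Finset.sum_le_sum fun j _ => Finset.sum_le_sum fun k _ => ?_
          rw [abs_mul, abs_mul]
          have := hclose j k
          gcongr
      _ = ((n : ℝ) + 1)⁻¹ * (∑ j, |x j|) ^ 2 := by
          rw [sq, Finset.sum_mul_sum, Finset.mul_sum]
          refine Finset.sum_congr rfl fun j _ => ?_
          rw [Finset.mul_sum]
          refine Finset.sum_congr rfl fun k _ => by ring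
  have hCS : (∑ j, |x j|) ^ 2 ≤ (n : ℝ) * S := by
    have := sq_sum_le_card_mul_sum_sq (s := (Finset.univ : Finset (Fin n)))
      (f := fun j => |x j|)
    simpa [sq_abs, hS] using this
  have hElt : |E| < S := by
    calc |E| ≤ ((n : ℝ) + 1)⁻¹ * (∑ j, |x j|) ^ 2 := hEbound
      _ ≤ ((n : ℝ) + 1)⁻¹ * ((n : ℝ) * S) := by gcongr
      _ = (((n : ℝ) + 1)⁻¹ * (n : ℝ)) * S := by ring
      _ < 1 * S := by
          refine mul_lt_mul_of_pos_right ?_ hSpos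
          rw [inv_mul_lt_iff₀ hn1, mul_one]
          linarith
      _ = S := one_mul S
  rw [hdot, hsplit]
  have : -E ≤ |E| := neg_le_abs E
  linarith

/-- Key step of Lemma 4.6: if `f` is a matrix-valued function, holomorphic near `0`,
symmetric-valued, with `f 0 = 0` and `f' 0 = Id`, then for all small `τ > 0` the matrix
`f (iτ)` is invertible and `Im (-(f (iτ))⁻¹)` is symmetric positive definite. -/
theorem im_neg_inv_posDef_of_deriv_id {n : ℕ} (U : Set ℂ) (hU : U ∈ nhds (0 : ℂ))
    (f : ℂ → Matrix (Fin n) (Fin n) ℂ)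
    (hol : ∀ ζ ∈ U, ∀ j k, DifferentiableAt ℂ (fun z => f z j k) ζ)
    (hsymm : ∀ ζ ∈ U, (f ζ)ᵀ = f ζ)
    (h0 : f 0 = 0)
    (hderiv : ∀ j k, HasDerivAt (fun z => f z j k)
      ((1 : Matrix (Fin n) (Fin n) ℂ) j k) 0) :
    ∃ ε > 0, ∀ τ : ℝ, τ ∈ Set.Ioo 0 ε →
      IsUnit (f (τ * Complex.I)) ∧
      (Matrix.of fun j k => ((-(f (τ * Complex.I))⁻¹) j k).im).PosDef := by
  classical
  set g : ℝ → Matrix (Fin n) (Fin n) ℂ :=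
    fun τ => ((τ : ℂ) * Complex.I)⁻¹ • f ((τ : ℂ) * Complex.I) with hg
  -- the embedding τ ↦ τ * I
  have hbase : Tendsto (fun τ : ℝ => (τ : ℂ) * Complex.I) (nhdsWithin 0 (Set.Ioi 0))
      (nhds 0) := by
    have : Tendsto (fun τ : ℝ => (τ : ℂ) * Complex.I) (nhds 0) (nhds 0) := by
      have h := Continuous.tendsto (f := fun τ : ℝ => (τ : ℂ) * Complex.I)
        (Complex.continuous_ofReal.mul continuous_const) (0 : ℝ)
      simpa using h
    exact this.mono_left nhdsWithin_le_nhds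
  have hmap : Tendsto (fun τ : ℝ => (τ : ℂ) * Complex.I) (nhdsWithin 0 (Set.Ioi 0))
      (nhdsWithin 0 {(0 : ℂ)}ᶜ) := by
    rw [tendsto_nhdsWithin_iff]
    refine ⟨hbase, ?_⟩
    filter_upwards [self_mem_nhdsWithin] with τ hτ
    exact mul_ne_zero (Complex.ofReal_ne_zero.2 (ne_of_gt hτ)) Complex.I_ne_zero
  -- g tends to 1
  have hgtend : Tendsto g (nhdsWithin 0 (Set.Ioi 0)) (nhds (1 : Matrix (Fin n) (Fin n) ℂ)) := by
    refine tendsto_pi_nhds.2 ?_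
    intro j
    rw [tendsto_pi_nhds]
    intro k
    have hs := hasDerivAt_iff_tendsto_slope.1 (hderiv j k)
    have := hs.comp hmap
    refine this.congr fun τ => ?_
    show slope (fun z => f z j k) 0 ((τ : ℂ) * Complex.I) = g τ j k
    rw [slope_def_field, hg]
    simp [h0, div_eq_inv_mul]
  -- inverse tends to 1
  have hinvcont : ContinuousAt Inv.inv (1 : Matrix (Fin n) (Fin n) ℂ) := by
    apply continuousAt_matrix_inv
    rw [Matrix.det_one, Ring.inverse_eq_inv']
    exact continuousAt_inv₀ one_ne_zero
  have hinv : Tendsto (fun τ => (g τ)⁻¹) (nhdsWithin 0 (Set.Ioi 0))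
      (nhds (1 : Matrix (Fin n) (Fin n) ℂ)) := by
    have := hinvcont.tendsto.comp hgtend
    simpa [Function.comp_def] using this
  -- determinant eventually nonzero
  have hdet : Tendsto (fun τ => (g τ).det) (nhdsWithin 0 (Set.Ioi 0)) (nhds (1 : ℂ)) := by
    have hc : Continuous fun A : Matrix (Fin n) (Fin n) ℂ => A.det := continuous_id.matrix_det
    have := (hc.tendsto 1).comp hgtend
    simpa [Function.comp_def] using this
  have hdetne : ∀ᶠ τ in nhdsWithin 0 (Set.Ioi 0), (g τ).det ≠ 0 :=
    hdet.eventually_ne one_ne_zero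
  -- entries of the inverse are eventually close to the identity
  set δ : ℝ := ((n : ℝ) + 1)⁻¹ with hδ
  have hδpos : 0 < δ := by rw [hδ]; positivity
  have hentry : ∀ᶠ τ in nhdsWithin 0 (Set.Ioi 0), ∀ j k,
      |((g τ)⁻¹ j k).re - (1 : Matrix (Fin n) (Fin n) ℝ) j k| ≤ δ := by
    rw [eventually_all]
    intro j
    rw [eventually_all]
    intro k
    have h1 : Tendsto (fun τ => ((g τ)⁻¹ j k).re) (nhdsWithin 0 (Set.Ioi 0))
        (nhds (((1 : Matrix (Fin n) (Fin n) ℂ) j k).re)) := by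
      have he : Tendsto (fun τ => (g τ)⁻¹ j k) (nhdsWithin 0 (Set.Ioi 0))
          (nhds ((1 : Matrix (Fin n) (Fin n) ℂ) j k)) := by
        have := tendsto_pi_nhds.1 hinv j
        exact tendsto_pi_nhds.1 this k
      exact (Complex.continuous_re.tendsto _).comp he
    have hre : ((1 : Matrix (Fin n) (Fin n) ℂ) j k).re = (1 : Matrix (Fin n) (Fin n) ℝ) j k := by
      by_cases h : j = k <;> simp [Matrix.one_apply, h]
    rw [hre] at h1
    have hnhds : ∀ᶠ y in nhds ((1 : Matrix (Fin n) (Fin n) ℝ) j k),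
        |y - (1 : Matrix (Fin n) (Fin n) ℝ) j k| ≤ δ := by
      filter_upwards [Metric.closedBall_mem_nhds ((1 : Matrix (Fin n) (Fin n) ℝ) j k) hδpos]
        with y hy
      simpa [Real.dist_eq] using hy
    exact h1.eventually hnhds
  -- eventually in U
  have hmemU : ∀ᶠ τ : ℝ in nhdsWithin 0 (Set.Ioi 0), (τ : ℂ) * Complex.I ∈ U := hbase hU
  -- extract ε
  have hall := hdetne.and (hentry.and hmemU)
  obtain ⟨ε, hε, hsub⟩ := (mem_nhdsGT_iff_exists_Ioo_subset (a := (0:ℝ))).1 hall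
  refine ⟨ε, hε, fun τ hτ => ?_⟩
  obtain ⟨hd, hent, hmem⟩ := hsub hτ
  set c : ℂ := (τ : ℂ) * Complex.I with hc
  have hc0 : c ≠ 0 :=
    mul_ne_zero (Complex.ofReal_ne_zero.2 (ne_of_gt hτ.1)) Complex.I_ne_zero
  have hA : f c = c • g τ := by
    rw [hg]
    simp only
    rw [smul_smul, mul_inv_cancel₀ hc0, one_smul]
  have hginv_unit : IsUnit (g τ).det := Ne.isUnit hd
  have hdetA : (f c).det ≠ 0 := by
    rw [hA, Matrix.det_smul]
    exact mul_ne_zero (pow_ne_zero _ hc0) hd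
  have hUnit : IsUnit (f c) := (Matrix.isUnit_iff_isUnit_det _).2 (Ne.isUnit hdetA)
  have hAinv : (f c)⁻¹ = c⁻¹ • (g τ)⁻¹ := by
    apply Matrix.inv_eq_right_inv
    rw [hA, Matrix.smul_mul, Matrix.mul_smul, Matrix.mul_nonsing_inv _ hginv_unit,
      smul_smul, mul_inv_cancel₀ hc0, one_smul]
  -- symmetry of the inverse
  have hgsymm : (g τ)ᵀ = g τ := by
    rw [hg]
    simp only
    rw [Matrix.transpose_smul, hsymm _ hmem]
  have hginvsymm : ((g τ)⁻¹)ᵀ = (g τ)⁻¹ := by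
    rw [Matrix.transpose_nonsing_inv, hgsymm]
  have hginvsymm' : ∀ j k, (g τ)⁻¹ k j = (g τ)⁻¹ j k := by
    intro j k
    have := congrFun (congrFun hginvsymm j) k
    rwa [Matrix.transpose_apply] at this
  set R : Matrix (Fin n) (Fin n) ℝ := Matrix.of fun j k => ((g τ)⁻¹ j k).re with hR
  have hRherm : R.IsHermitian := by
    apply Matrix.ext
    intro j k
    rw [Matrix.conjTranspose_apply]
    simp only [hR, Matrix.of_apply, star_trivial]
    rw [hginvsymm' j k]
  have hRpos : R.PosDef := by
    refine aux_posdef_of_close R hRherm fun j k => ?_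
    simpa [hR, hδ] using hent j k
  have hM : (Matrix.of fun j k => ((-(f c)⁻¹) j k).im) = (τ⁻¹ : ℝ) • R := by
    apply Matrix.ext
    intro j k
    rw [Matrix.of_apply, Matrix.smul_apply, hR, Matrix.of_apply, Matrix.neg_apply, hAinv,
      Matrix.smul_apply, hc]
    set z : ℂ := (g τ)⁻¹ j k
    rw [smul_eq_mul, smul_eq_mul]
    rw [_root_.mul_inv_rev, Complex.inv_I]
    simp [Complex.mul_im, Complex.mul_re]
  refine ⟨hUnit, ?_⟩
  rw [hM]
  have hτinv : (0 : ℝ) < τ⁻¹ := inv_pos.2 hτ.1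
  refine posDef_iff_dotProduct_mulVec.2 ⟨?_, ?_⟩
  · apply Matrix.ext
    intro j k
    rw [Matrix.conjTranspose_apply, Matrix.smul_apply, Matrix.smul_apply, star_trivial]
    have h2 := congrFun (congrFun hRherm j) k
    rw [Matrix.conjTranspose_apply, star_trivial] at h2
    rw [h2]
  · intro y hy
    rw [Matrix.smul_mulVec]
    have : dotProduct (star y) (τ⁻¹ • (R *ᵥ y)) = τ⁻¹ * dotProduct (star y) (R *ᵥ y) := by
      rw [dotProduct_smul, smul_eq_mul]
    rw [this]
    exact mul_pos hτinv (hRpos.dotProduct_mulVec_pos hy)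
end

section
/- Let f be a function with values in m×m complex matrices, holomorphic in a neighborhood of 0 in ℂ, such that f(ζ) is a symmetric matrix for every ζ in this neighborhood, f(0) = 0, and f′(0) = Id. Then lim_{δ→0⁺} lim_{τ→0⁺} ∫_{−δ}^{δ} Im(−f(σ+iτ)⁻¹) dσ = π·Id, where the integral is taken entrywise (for δ and τ sufficiently small the matrix f(σ+iτ) is invertible so the integrand is defined). -/
open Filter Matrix MeasureTheory


private lemma aux_integral_poisson (δ τ : ℝ) (hδ : 0 ≤ δ) (hτ : 0 < τ) :
    ∫ σ : ℝ in Set.Icc (-δ) δ, τ / (σ ^ 2 + τ ^ 2) = 2 * Real.arctan (δ / τ) := by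
  rw [MeasureTheory.integral_Icc_eq_integral_Ioc,
    ← intervalIntegral.integral_of_le (by linarith : -δ ≤ δ)]
  have h1 : ∀ σ : ℝ, τ / (σ ^ 2 + τ ^ 2) = τ⁻¹ * ((1 : ℝ) + (σ / τ) ^ 2)⁻¹ := by
    intro σ
    rw [div_pow]
    rw [eq_comm]
    field_simp
    ring
  simp_rw [h1]
  rw [intervalIntegral.integral_const_mul]
  have h2 := intervalIntegral.inv_mul_integral_comp_div
    (f := fun x : ℝ => ((1 : ℝ) + x ^ 2)⁻¹) (a := -δ) (b := δ) (c := τ)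
  rw [h2, integral_inv_one_add_sq, neg_div, Real.arctan_neg]
  ring

private lemma aux_tendsto_two_arctan (δ : ℝ) (hδ : 0 < δ) :
    Tendsto (fun τ : ℝ => 2 * Real.arctan (δ / τ)) (nhdsWithin (0 : ℝ) (Set.Ioi 0))
      (nhds Real.pi) := by
  have h1 : Tendsto (fun τ : ℝ => δ / τ) (nhdsWithin (0 : ℝ) (Set.Ioi 0)) atTop := by
    simpa [div_eq_mul_inv] using tendsto_inv_nhdsGT_zero.const_mul_atTop hδ
  have h2 : Tendsto (fun τ : ℝ => Real.arctan (δ / τ)) (nhdsWithin (0 : ℝ) (Set.Ioi 0))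
      (nhds (Real.pi / 2)) :=
    (tendsto_nhds_of_tendsto_nhdsWithin Real.tendsto_arctan_atTop).comp h1
  have h3 := h2.const_mul 2
  have : 2 * (Real.pi / 2) = Real.pi := by ring
  rwa [this] at h3

set_option maxHeartbeats 4000000 in
/-- Lemma 4.9 (abstracted): if `f` is a matrix-valued function, holomorphic near `0`,
symmetric-valued, with `f 0 = 0` and `f' 0 = Id`, then
`lim_{δ→0⁺} lim_{τ→0⁺} ∫_{-δ}^{δ} Im (-(f (σ + iτ))⁻¹) dσ = π • Id`
(entrywise integrals). -/
theorem lim_lim_int_im_neg_inv_eq_pi_smul_id {m : ℕ} (U : Set ℂ) (hU : U ∈ nhds (0 : ℂ))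
    (f : ℂ → Matrix (Fin m) (Fin m) ℂ)
    (hol : ∀ ζ ∈ U, ∀ j k, DifferentiableAt ℂ (fun z => f z j k) ζ)
    (hsymm : ∀ ζ ∈ U, (f ζ)ᵀ = f ζ)
    (h0 : f 0 = 0)
    (hderiv : ∀ j k, HasDerivAt (fun z => f z j k)
      ((1 : Matrix (Fin m) (Fin m) ℂ) j k) 0) :
    ∃ L : ℝ → Matrix (Fin m) (Fin m) ℝ,
      (∀ᶠ δ in nhdsWithin (0 : ℝ) (Set.Ioi 0),
        Tendsto
          (fun τ : ℝ => Matrix.of fun j k =>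
            ∫ σ : ℝ in Set.Icc (-δ) δ, ((-(f ((σ : ℂ) + τ * Complex.I))⁻¹) j k).im)
          (nhdsWithin (0 : ℝ) (Set.Ioi 0)) (nhds (L δ))) ∧
      Tendsto L (nhdsWithin (0 : ℝ) (Set.Ioi 0))
        (nhds (Real.pi • (1 : Matrix (Fin m) (Fin m) ℝ))) := by
  classical
  obtain ⟨ε, εpos, hball⟩ := Metric.mem_nhds_iff.1 hU
  -- entrywise analyticity on the ball
  have hAnal : ∀ (j k : Fin m), ∀ z ∈ Metric.ball (0 : ℂ) ε,
      AnalyticAt ℂ (fun w => f w j k) z := by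
    intro j k z hz
    exact DifferentiableOn.analyticAt
      (fun w hw => (hol w (hball hw) j k).differentiableWithinAt)
      (Metric.isOpen_ball.mem_nhds hz)
  -- the matrix G with f z = z • G z
  set G : ℂ → Matrix (Fin m) (Fin m) ℂ :=
    fun z => Matrix.of fun j k => dslope (fun w => f w j k) 0 z with hGdef
  have hG0 : G 0 = 1 := by
    ext j k
    simp only [hGdef, Matrix.of_apply, dslope_same]
    exact (hderiv j k).deriv
  have hGne : ∀ (j k : Fin m), ∀ z : ℂ, z ≠ 0 →
      G z j k = z⁻¹ * f z j k := by
    intro j k z hz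
    simp only [hGdef, Matrix.of_apply, dslope_of_ne _ hz, slope_def_field, h0,
      Matrix.zero_apply, div_eq_inv_mul, sub_zero]
  have hGcont : ∀ z ∈ Metric.ball (0 : ℂ) ε, ContinuousAt G z := by
    intro z hz
    apply continuousAt_pi.2
    intro j
    apply continuousAt_pi.2
    intro k
    rcases eq_or_ne z 0 with rfl | hz0
    · obtain ⟨p, hp⟩ := hAnal j k 0 hz
      exact (hp.has_fpower_series_dslope_fslope).analyticAt.continuousAt
    · have h1 : ContinuousAt (fun w : ℂ => w⁻¹ * f w j k) z :=
        (continuousAt_inv₀ hz0).mul ((hAnal j k z hz).continuousAt)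
      refine h1.congr (Filter.eventuallyEq_of_mem
        (compl_singleton_mem_nhds hz0) fun w hw => ?_)
      exact (hGne j k w hw).symm
  -- the subleading part Q with Q z = z⁻¹ • (G z - 1) off zero
  set E : Fin m → Fin m → ℂ → ℂ :=
    fun j k w => f w j k - w * (1 : Matrix (Fin m) (Fin m) ℂ) j k with hEdef
  have hE0 : ∀ j k, E j k 0 = 0 := by
    intro j k; simp [hEdef, h0]
  have hEderiv : ∀ j k, deriv (E j k) 0 = 0 := by
    intro j k
    have : HasDerivAt (E j k) 0 0 := by
      have := (hderiv j k).sub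
        ((hasDerivAt_id (0 : ℂ)).mul_const ((1 : Matrix (Fin m) (Fin m) ℂ) j k))
      exact this.congr_deriv (by simp)
    exact this.deriv
  have hEanal : ∀ (j k : Fin m), ∀ z ∈ Metric.ball (0 : ℂ) ε, AnalyticAt ℂ (E j k) z := by
    intro j k z hz
    exact (hAnal j k z hz).sub ((analyticAt_id.mul analyticAt_const))
  set Q : ℂ → Matrix (Fin m) (Fin m) ℂ :=
    fun z => Matrix.of fun j k => dslope (dslope (E j k) 0) 0 z with hQdef
  have hQne : ∀ (j k : Fin m), ∀ z : ℂ, z ≠ 0 →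
      Q z j k = z⁻¹ * (z⁻¹ * E j k z) := by
    intro j k z hz
    have h1 : dslope (E j k) 0 z = z⁻¹ * E j k z := by
      rw [dslope_of_ne _ hz, slope_def_field, hE0, sub_zero, sub_zero, div_eq_inv_mul]
    rw [hQdef]
    simp only [Matrix.of_apply]
    rw [dslope_of_ne _ hz, slope_def_field, dslope_same, hEderiv, sub_zero, sub_zero,
      div_eq_inv_mul, h1]
  have hQcont : ∀ z ∈ Metric.ball (0 : ℂ) ε, ContinuousAt Q z := by
    intro z hz
    apply continuousAt_pi.2
    intro j
    apply continuousAt_pi.2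
    intro k
    rcases eq_or_ne z 0 with rfl | hz0
    · obtain ⟨p, hp⟩ := hEanal j k 0 hz
      exact ((hp.has_fpower_series_dslope_fslope).has_fpower_series_dslope_fslope).analyticAt.continuousAt
    · have h1 : ContinuousAt (fun w : ℂ => w⁻¹ * (w⁻¹ * E j k w)) z :=
        (continuousAt_inv₀ hz0).mul
          ((continuousAt_inv₀ hz0).mul (hEanal j k z hz).continuousAt)
      refine h1.congr (Filter.eventuallyEq_of_mem
        (compl_singleton_mem_nhds hz0) fun w hw => ?_)
      exact (hQne j k w hw).symm
  -- choose η so that det (G z) ≠ 0 on the closed ball of radius η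
  have hdet0 : ∀ᶠ z in nhds (0 : ℂ), (G z).det ≠ 0 := by
    have hc : ContinuousAt (fun z => (G z).det) 0 :=
      (continuous_id.matrix_det).continuousAt.comp (hGcont 0 (Metric.mem_ball_self εpos))
    have : (G 0).det = 1 := by rw [hG0, Matrix.det_one]
    have h1 : ∀ᶠ w in nhds ((G 0).det), w ≠ 0 := by
      rw [this]; exact eventually_ne_nhds one_ne_zero
    exact hc.eventually h1
  obtain ⟨r, rpos, hr⟩ := Metric.eventually_nhds_iff_ball.1 hdet0
  set η : ℝ := min r ε / 2 with hηdef
  have ηpos : 0 < η := by positivity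
  have hηε : η < ε := by
    have h1 := min_le_right r ε
    rw [hηdef]; linarith
  have hηr : η < r := by
    have h1 := min_le_left r ε
    rw [hηdef]; linarith
  have hηball : ∀ z : ℂ, ‖z‖ ≤ η → z ∈ Metric.ball (0 : ℂ) ε := by
    intro z hz
    rw [Metric.mem_ball, Complex.dist_eq, sub_zero]
    linarith
  have hηdet : ∀ z : ℂ, ‖z‖ ≤ η → (G z).det ≠ 0 := by
    intro z hz
    apply hr
    rw [Metric.mem_ball, Complex.dist_eq, sub_zero]
    linarith
  -- the regular part K
  set K : ℂ → Matrix (Fin m) (Fin m) ℂ := fun z => (G z)⁻¹ * Q z with hKdef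
  have hKcont : ∀ z : ℂ, ‖z‖ ≤ η → ContinuousAt K z := by
    intro z hz
    have hGz := hGcont z (hηball z hz)
    have hQz := hQcont z (hηball z hz)
    have hdetz : ContinuousAt (fun w => (G w).det) z :=
      (continuous_id.matrix_det).continuousAt.comp hGz
    have hadj : ContinuousAt (fun w => (G w).adjugate) z :=
      (continuous_id.matrix_adjugate).continuousAt.comp hGz
    have hinv : ContinuousAt (fun w => (G w)⁻¹) z := by
      have : ContinuousAt (fun w => ((G w).det)⁻¹ • (G w).adjugate) z :=
        (hdetz.inv₀ (hηdet z hz)).smul hadj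
      refine this.congr (Filter.Eventually.of_forall fun w => ?_)
      show ((G w).det)⁻¹ • (G w).adjugate = (G w)⁻¹
      rw [Matrix.inv_def, Ring.inverse_eq_inv]
    have hmul : Continuous fun p : Matrix (Fin m) (Fin m) ℂ × Matrix (Fin m) (Fin m) ℂ =>
        p.1 * p.2 := continuous_fst.matrix_mul continuous_snd
    exact hmul.continuousAt.comp (hinv.prodMk hQz)
  -- key algebraic identity
  have hkey : ∀ z : ℂ, ‖z‖ ≤ η → z ≠ 0 →
      -(f z)⁻¹ = (-z⁻¹) • (1 : Matrix (Fin m) (Fin m) ℂ) + K z := by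
    intro z hz hz0
    have hdetz : IsUnit (G z).det := isUnit_iff_ne_zero.2 (hηdet z hz)
    have hfz : f z = z • G z := by
      ext j k
      rw [Matrix.smul_apply, hGne j k z hz0, smul_eq_mul]
      field_simp
    have hQz : Q z = z⁻¹ • (G z - 1) := by
      ext j k
      rw [hQne j k z hz0, Matrix.smul_apply, Matrix.sub_apply, hGne j k z hz0,
        smul_eq_mul, hEdef]
      field_simp
    have hGinv : (G z)⁻¹ * G z = 1 := Matrix.nonsing_inv_mul _ hdetz
    have hKz : K z = z⁻¹ • (1 - (G z)⁻¹) := by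
      rw [hKdef]
      simp only
      rw [hQz, Matrix.mul_smul, Matrix.mul_sub, hGinv, Matrix.mul_one]
    have hfinv : (f z)⁻¹ = z⁻¹ • (G z)⁻¹ := by
      apply Matrix.inv_eq_right_inv
      rw [hfz, Matrix.smul_mul, Matrix.mul_smul, Matrix.mul_nonsing_inv _ hdetz,
        smul_smul, mul_inv_cancel₀ hz0, one_smul]
    rw [hfinv, hKz]
    module
  -- bounds for entries of K on the closed ball
  have hKbdd : ∀ j k : Fin m, ∃ C : ℝ, ∀ z : ℂ, ‖z‖ ≤ η →
      |((K z) j k).im| ≤ C := by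
    intro j k
    have hcomp : IsCompact (Metric.closedBall (0 : ℂ) η) := isCompact_closedBall _ _
    have hcont : ContinuousOn (fun z => ((K z) j k).im) (Metric.closedBall (0 : ℂ) η) := by
      intro z hz
      have : ‖z‖ ≤ η := by
        rwa [Metric.mem_closedBall, Complex.dist_eq, sub_zero] at hz
      exact (Complex.continuous_im.continuousAt.comp
        (((continuous_apply k).comp (continuous_apply j)).continuousAt.comp
          (hKcont z this))).continuousWithinAt
    obtain ⟨C, hC⟩ := hcomp.exists_bound_of_continuousOn hcont
    refine ⟨C, fun z hz => ?_⟩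
    have hmem : z ∈ Metric.closedBall (0 : ℂ) η := by
      rwa [Metric.mem_closedBall, Complex.dist_eq, sub_zero]
    simpa using hC z hmem
  -- entrywise continuity of K composed with projections
  have hKentry : ∀ (j k : Fin m), ∀ z : ℂ, ‖z‖ ≤ η →
      ContinuousAt (fun w => ((K w) j k).im) z := by
    intro j k z hz
    have h1 : Continuous fun M : Matrix (Fin m) (Fin m) ℂ => (M j k).im :=
      Complex.continuous_im.comp ((continuous_apply k).comp (continuous_apply j))
    exact h1.continuousAt.comp (hKcont z hz)
  clear_value K
  -- the candidate limit function
  set L : ℝ → Matrix (Fin m) (Fin m) ℝ := fun δ =>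
    Real.pi • 1 + Matrix.of fun j k => ∫ σ : ℝ in Set.Icc (-δ) δ, ((K (σ : ℂ)) j k).im
    with hLdef
  clear_value L
  refine ⟨L, ?_, ?_⟩
  · -- inner limit
    filter_upwards [Ioc_mem_nhdsGT (half_pos ηpos)] with δ hδ
    obtain ⟨hδ0, hδη⟩ := hδ
    refine tendsto_pi_nhds.2 ?_
    intro j
    rw [tendsto_pi_nhds]
    intro k
    obtain ⟨C, hC⟩ := hKbdd j k
    -- membership facts
    have hzmem : ∀ σ τ : ℝ, σ ∈ Set.Icc (-δ) δ → τ ∈ Set.Ioc (0:ℝ) (η/2) →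
        ‖((σ : ℂ) + (τ : ℝ) * Complex.I)‖ ≤ η ∧
          ((σ : ℂ) + (τ : ℝ) * Complex.I) ≠ 0 := by
      intro σ τ hσ hτ
      set z : ℂ := (σ : ℂ) + (τ : ℝ) * Complex.I with hzdef
      have hre : z.re = σ := by simp [hzdef]
      have him : z.im = τ := by simp [hzdef]
      constructor
      · have h1 := Complex.norm_le_abs_re_add_abs_im z
        rw [hre, him] at h1
        have h2 : |σ| ≤ δ := abs_le.2 ⟨hσ.1, hσ.2⟩
        have h3 : |τ| ≤ η / 2 := by rw [abs_of_pos hτ.1]; exact hτ.2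
        linarith
      · intro h
        rw [h] at him
        simp at him
        exact hτ.1.ne' him.symm
    -- main tendsto via congruence
    have heq : ∀ᶠ τ : ℝ in nhdsWithin (0 : ℝ) (Set.Ioi 0),
        (Matrix.of fun j k =>
            ∫ σ : ℝ in Set.Icc (-δ) δ, ((-(f ((σ : ℂ) + (τ:ℝ) * Complex.I))⁻¹) j k).im) j k
          = 2 * Real.arctan (δ / τ) * ((1 : Matrix (Fin m) (Fin m) ℝ) j k)
            + ∫ σ : ℝ in Set.Icc (-δ) δ, ((K ((σ : ℂ) + (τ:ℝ) * Complex.I)) j k).im := by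
      filter_upwards [Ioc_mem_nhdsGT (half_pos ηpos)] with τ hτ
      simp only [Matrix.of_apply]
      have hint : Set.EqOn
          (fun σ : ℝ => ((-(f ((σ : ℂ) + (τ:ℝ) * Complex.I))⁻¹) j k).im)
          (fun σ : ℝ => τ / (σ ^ 2 + τ ^ 2) * ((1 : Matrix (Fin m) (Fin m) ℝ) j k)
            + ((K ((σ : ℂ) + (τ:ℝ) * Complex.I)) j k).im)
          (Set.Icc (-δ) δ) := by
        intro σ hσ
        obtain ⟨habs, hne⟩ := hzmem σ τ hσ hτ
        dsimp only
        rw [hkey _ habs hne]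
        set z : ℂ := (σ : ℂ) + (τ : ℝ) * Complex.I with hzdef
        have hre : z.re = σ := by simp [hzdef]
        have him : z.im = τ := by simp [hzdef]
        have hnormSq : Complex.normSq z = σ ^ 2 + τ ^ 2 := by
          rw [Complex.normSq_apply, hre, him]; ring
        rcases eq_or_ne j k with rfl | hjk
        · simp only [Matrix.add_apply, Matrix.smul_apply, Matrix.one_apply_eq,
            smul_eq_mul, mul_one, Complex.add_im, Complex.neg_im, Complex.inv_im,
            hnormSq, him]
          ring
        · simp only [Matrix.add_apply, Matrix.smul_apply, Matrix.one_apply_ne hjk,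
            smul_eq_mul, mul_zero, Complex.add_im, Complex.zero_im, zero_add,
            mul_comm, zero_mul]
      rw [MeasureTheory.setIntegral_congr_fun measurableSet_Icc hint]
      have hKcontOn : ContinuousOn
          (fun σ : ℝ => ((K ((σ : ℂ) + (τ:ℝ) * Complex.I)) j k).im)
          (Set.Icc (-δ) δ) := by
        intro σ hσ
        obtain ⟨habs, -⟩ := hzmem σ τ hσ hτ
        have hcont : Continuous fun σ : ℝ => (σ : ℂ) + (τ:ℝ) * Complex.I :=
          Complex.continuous_ofReal.add continuous_const
        have h2 : ContinuousAt
            (fun σ : ℝ => ((K ((σ : ℂ) + (τ:ℝ) * Complex.I)) j k).im) σ :=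
          (hKentry j k _ habs).tendsto.comp (hcont.continuousAt (x := σ))
        exact h2.continuousWithinAt
      have i2 : IntegrableOn
          (fun σ : ℝ => ((K ((σ : ℂ) + (τ:ℝ) * Complex.I)) j k).im)
          (Set.Icc (-δ) δ) := hKcontOn.integrableOn_Icc
      have i1 : IntegrableOn
          (fun σ : ℝ => τ / (σ ^ 2 + τ ^ 2) * ((1 : Matrix (Fin m) (Fin m) ℝ) j k))
          (Set.Icc (-δ) δ) := by
        apply Continuous.integrableOn_Icc
        have hden : ∀ σ : ℝ, σ ^ 2 + τ ^ 2 ≠ 0 := by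
          intro σ
          have := hτ.1
          positivity
        exact (continuous_const.div ((continuous_pow 2).add continuous_const) hden).mul
          continuous_const
      rw [MeasureTheory.integral_add i1 i2, MeasureTheory.integral_mul_const,
        aux_integral_poisson δ τ hδ0.le hτ.1]
    refine Tendsto.congr' (Filter.EventuallyEq.symm heq) ?_
    have hLval : (L δ) j k = Real.pi * ((1 : Matrix (Fin m) (Fin m) ℝ) j k)
        + ∫ σ : ℝ in Set.Icc (-δ) δ, ((K (σ : ℂ)) j k).im := by
      simp [hLdef, Matrix.add_apply, Matrix.smul_apply, smul_eq_mul]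
    rw [hLval]
    apply Tendsto.add
    · exact (aux_tendsto_two_arctan δ hδ0).mul_const _
    · -- dominated convergence
      refine MeasureTheory.tendsto_integral_filter_of_dominated_convergence
        (μ := MeasureTheory.volume.restrict (Set.Icc (-δ) δ))
        (F := fun (τ : ℝ) (σ : ℝ) => ((K ((σ : ℂ) + (τ:ℝ) * Complex.I)) j k).im)
        (f := fun σ : ℝ => ((K ((σ : ℝ) : ℂ)) j k).im)
        (bound := fun _ => C) ?_ ?_ ?_ ?_
      · filter_upwards [Ioc_mem_nhdsGT (half_pos ηpos)] with τ hτ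
        have hKcontOn : ContinuousOn
            (fun σ : ℝ => ((K ((σ : ℂ) + (τ:ℝ) * Complex.I)) j k).im)
            (Set.Icc (-δ) δ) := by
          intro σ hσ
          obtain ⟨habs, -⟩ := hzmem σ τ hσ hτ
          have hcont : Continuous fun σ : ℝ => (σ : ℂ) + (τ:ℝ) * Complex.I :=
            Complex.continuous_ofReal.add continuous_const
          have h2 : ContinuousAt
              (fun σ : ℝ => ((K ((σ : ℂ) + (τ:ℝ) * Complex.I)) j k).im) σ :=
            (hKentry j k _ habs).tendsto.comp (hcont.continuousAt (x := σ))
          exact h2.continuousWithinAt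
        exact hKcontOn.aestronglyMeasurable measurableSet_Icc
      · filter_upwards [Ioc_mem_nhdsGT (half_pos ηpos)] with τ hτ
        refine (MeasureTheory.ae_restrict_iff' measurableSet_Icc).2
          (Filter.Eventually.of_forall fun σ hσ => ?_)
        obtain ⟨habs, -⟩ := hzmem σ τ hσ hτ
        simpa [Real.norm_eq_abs] using hC _ habs
      · exact MeasureTheory.integrableOn_const
          (by rw [Real.volume_Icc]; exact ENNReal.ofReal_lt_top.ne)
      · refine (MeasureTheory.ae_restrict_iff' measurableSet_Icc).2
          (Filter.Eventually.of_forall fun σ hσ => ?_)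
        have hσabs : ‖((σ : ℂ))‖ ≤ η := by
          rw [Complex.norm_real, Real.norm_eq_abs]
          have h2 : |σ| ≤ δ := abs_le.2 ⟨hσ.1, hσ.2⟩
          linarith
        have h1 : Tendsto (fun τ : ℝ => (σ : ℂ) + (τ:ℝ) * Complex.I)
            (nhdsWithin (0 : ℝ) (Set.Ioi 0)) (nhds ((σ : ℂ))) := by
          have hcont : Continuous fun τ : ℝ => (σ : ℂ) + (τ:ℝ) * Complex.I :=
            continuous_const.add (Complex.continuous_ofReal.mul continuous_const)
          exact (hcont.tendsto' 0 _ (by simp)).mono_left nhdsWithin_le_nhds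
        have h2 : Tendsto
            (fun τ : ℝ => ((K ((σ : ℂ) + (τ:ℝ) * Complex.I)) j k).im)
            (nhdsWithin (0 : ℝ) (Set.Ioi 0)) (nhds (((K ((σ : ℂ))) j k).im)) :=
          ((hKentry j k _ hσabs).tendsto).comp h1
        exact h2
  · -- outer limit
    refine tendsto_pi_nhds.2 ?_
    intro j
    rw [tendsto_pi_nhds]
    intro k
    obtain ⟨C, hC⟩ := hKbdd j k
    have hval : ∀ δ : ℝ, (L δ) j k = Real.pi * ((1 : Matrix (Fin m) (Fin m) ℝ) j k)
        + ∫ σ : ℝ in Set.Icc (-δ) δ, ((K (σ : ℂ)) j k).im := by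
      intro δ
      simp [hLdef, Matrix.add_apply, Matrix.smul_apply, smul_eq_mul]
    have htarget : (Real.pi • (1 : Matrix (Fin m) (Fin m) ℝ)) j k
        = Real.pi * ((1 : Matrix (Fin m) (Fin m) ℝ) j k) := by
      simp [Matrix.smul_apply, smul_eq_mul]
    simp only [hval, htarget]
    have hzero : Tendsto (fun δ : ℝ => ∫ σ : ℝ in Set.Icc (-δ) δ, ((K (σ : ℂ)) j k).im)
        (nhdsWithin (0 : ℝ) (Set.Ioi 0)) (nhds 0) := by
      apply squeeze_zero_norm'
        (a := fun δ : ℝ => C * (2 * δ))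
      · filter_upwards [Ioc_mem_nhdsGT (half_pos ηpos)] with δ hδ
        have hbound : ∀ σ ∈ Set.Icc (-δ) δ, ‖((K ((σ:ℝ) : ℂ)) j k).im‖ ≤ C := by
          intro σ hσ
          have hσabs : ‖((σ : ℂ))‖ ≤ η := by
            rw [Complex.norm_real, Real.norm_eq_abs]
            have h2 : |σ| ≤ δ := abs_le.2 ⟨hσ.1, hσ.2⟩
            linarith [hδ.2]
          simpa [Real.norm_eq_abs] using hC _ hσabs
        have h1 := MeasureTheory.norm_setIntegral_le_of_norm_le_const
          (by rw [Real.volume_Icc]; exact ENNReal.ofReal_lt_top)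
          hbound
        rw [measureReal_def] at h1
        have h2 : (volume (Set.Icc (-δ) δ)).toReal = 2 * δ := by
          rw [Real.volume_Icc, ENNReal.toReal_ofReal (by linarith [hδ.1])]
          ring
        rw [h2] at h1
        exact h1
      · have hcont : Continuous fun δ : ℝ => C * (2 * δ) :=
          continuous_const.mul (continuous_const.mul continuous_id)
        exact (hcont.tendsto' 0 _ (by ring)).mono_left nhdsWithin_le_nhds
    have h4 := (tendsto_const_nhds
      (x := Real.pi * ((1 : Matrix (Fin m) (Fin m) ℝ) j k))
      (f := nhdsWithin (0 : ℝ) (Set.Ioi 0))).add hzero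
    simpa using h4
end
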